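/- Assume [N_{[−L,0]}, J_{−M}] = 0, assume hypothesis (ii) (the map t ↦ α_t(N_{[−L,0]}) is differentiable with derivative α_t(j_{−L−1,−L} − j_{0,1})), and assume the Lieb–Robinson bound: there exist constants C > 0, V > 0 such that ‖[α_u(j_{z,z+1}), J_{−M}]‖ ≤ C e^{−(|z+M|−5)} e^{2V|u|} for all u ∈ ℝ and integers z with |z + M| ≥ 6. Then for all integers M ≥ 6 and L ≥ M + 6 and every s ∈ ℝ, ‖[α_{−s}(N_{[−L,0]}), J_{−M}]‖ ≤ C e^{5} (e^{−M} + e^{−(L−M)}) (e^{2V|s|} − 1)/(2V). -/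

import Mathlib

open Set in
lemma aux_gron0 {E : Type*} [NormedAddCommGroup E] [NormedSpace ℝ E]
    {f f' : ℝ → E} (hf : ∀ t, HasDerivAt f (f' t) t) (h0 : f 0 = 0)
    {K V : ℝ} (hV : 0 < V)
    (hb : ∀ t, ‖f' t‖ ≤ K * Real.exp (2 * V * |t|)) :
    ∀ s : ℝ, 0 ≤ s → ‖f s‖ ≤ K * (Real.exp (2 * V * s) - 1) / (2 * V) := by
  intro s hs
  have hB : ∀ x : ℝ, HasDerivAt (fun t => K / (2 * V) * (Real.exp (2 * V * t) - 1))
      (K * Real.exp (2 * V * x)) x := by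
    intro x
    have h1 : HasDerivAt (fun t : ℝ => 2 * V * t) (2 * V) x := by
      simpa using (hasDerivAt_id x).const_mul (2 * V)
    have h2 := ((h1.exp).sub_const 1).const_mul (K / (2 * V))
    refine h2.congr_deriv ?_
    field_simp
  have := image_norm_le_of_norm_deriv_right_le_deriv_boundary
    (f := f) (f' := f') (a := 0) (b := s)
    (fun x _ => (hf x).continuousAt.continuousWithinAt)
    (fun x _ => (hf x).hasDerivWithinAt)
    (B := fun t => K / (2 * V) * (Real.exp (2 * V * t) - 1))
    (B' := fun t => K * Real.exp (2 * V * t))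
    (by simp [h0]) hB
    (fun x hx => by
      have := hb x
      rwa [abs_of_nonneg hx.1] at this)
    (right_mem_Icc.2 hs)
  calc ‖f s‖ ≤ K / (2 * V) * (Real.exp (2 * V * s) - 1) := this
    _ = K * (Real.exp (2 * V * s) - 1) / (2 * V) := by ring

lemma aux_gron {E : Type*} [NormedAddCommGroup E] [NormedSpace ℝ E]
    {f f' : ℝ → E} (hf : ∀ t, HasDerivAt f (f' t) t) (h0 : f 0 = 0)
    {K V : ℝ} (hV : 0 < V)
    (hb : ∀ t, ‖f' t‖ ≤ K * Real.exp (2 * V * |t|)) (s : ℝ) :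
    ‖f s‖ ≤ K * (Real.exp (2 * V * |s|) - 1) / (2 * V) := by
  rcases le_or_gt 0 s with hs | hs
  · rw [abs_of_nonneg hs]; exact aux_gron0 hf h0 hV hb s hs
  · have hg : ∀ t : ℝ, HasDerivAt (fun t => f (-t)) ((-1 : ℝ) • f' (-t)) t := by
      intro t
      exact (hf (-t)).scomp t (hasDerivAt_neg t)
    have hgb : ∀ t : ℝ, ‖(-1 : ℝ) • f' (-t)‖ ≤ K * Real.exp (2 * V * |t|) := by
      intro t
      rw [norm_smul]
      simpa [abs_neg] using hb (-t)
    have := aux_gron0 hg (by simpa using h0) hV hgb (-s) (by linarith)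
    rw [abs_of_neg hs]
    simpa using this



/-- assuming `[N_{[-L,0]}, J_{-M}] = 0`, hypothesis (ii)
(differentiability of `t ↦ α_t(N_{[-L,0]})` with derivative
`α_t(j_{-L-1,-L} - j_{0,1})`), and the Lieb-Robinson bound
`‖[α_u(j_{z,z+1}), J_{-M}]‖ ≤ C e^{-(|z+M|-5)} e^{2V|u|}` for `|z+M| ≥ 6`,
one has, for `M ≥ 6` and `L ≥ M + 6` and every `s`,
`‖[α_{-s}(N_{[-L,0]}), J_{-M}]‖ ≤ C e⁵ (e^{-M} + e^{-(L-M)})(e^{2V|s|} - 1)/(2V)`. -/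
theorem left_boundary_current_bound
    (A : Type*) [NormedRing A] [StarRing A] [CStarRing A] [NormedAlgebra ℂ A]
    [CompleteSpace A]
    (n h : ℤ → A)
    (α : ℝ → A ≃⋆ₐ[ℂ] A)
    (hα0 : ∀ a : A, α 0 a = a)
    (hαadd : ∀ (s t : ℝ) (a : A), α (s + t) a = α s (α t a))
    (hαiso : ∀ (t : ℝ) (a : A), ‖α t a‖ = ‖a‖)
    (C V : ℝ) (hC : 0 < C) (hV : 0 < V)
    (M L : ℤ) (hM : 6 ≤ M) (hL : M + 6 ≤ L)
    -- [N_{[-L,0]}, J_{-M}] = 0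
    (hcomm : (∑ x ∈ Finset.Icc (-L) 0, n x)
          * (Complex.I • (h (-M - 1) * h (-M) - h (-M) * h (-M - 1)))
        - (Complex.I • (h (-M - 1) * h (-M) - h (-M) * h (-M - 1)))
          * ∑ x ∈ Finset.Icc (-L) 0, n x = 0)
    -- (ii) derivative of t ↦ α_t(N_{[-L,0]}) is α_t(j_{-L-1,-L} - j_{0,1})
    (hdiffN : ∀ t : ℝ,
      HasDerivAt (fun s : ℝ => α s (∑ x ∈ Finset.Icc (-L) 0, n x))
        (α t (Complex.I • (n (-L - 1) * h (-L - 1) - h (-L - 1) * n (-L - 1))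
          - Complex.I • (n 0 * h 0 - h 0 * n 0))) t)
    -- Lieb-Robinson bound for currents against J_{-M}
    (hLR : ∀ (u : ℝ) (z : ℤ), (6 : ℤ) ≤ |z + M| →
      ‖α u (Complex.I • (n z * h z - h z * n z))
            * (Complex.I • (h (-M - 1) * h (-M) - h (-M) * h (-M - 1)))
          - (Complex.I • (h (-M - 1) * h (-M) - h (-M) * h (-M - 1)))
            * α u (Complex.I • (n z * h z - h z * n z))‖
        ≤ C * Real.exp (-(((|z + M| : ℤ) : ℝ) - 5)) * Real.exp (2 * V * |u|)) :
    ∀ s : ℝ,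
      ‖α (-s) (∑ x ∈ Finset.Icc (-L) 0, n x)
            * (Complex.I • (h (-M - 1) * h (-M) - h (-M) * h (-M - 1)))
          - (Complex.I • (h (-M - 1) * h (-M) - h (-M) * h (-M - 1)))
            * α (-s) (∑ x ∈ Finset.Icc (-L) 0, n x)‖
        ≤ C * Real.exp 5 * (Real.exp (-(M : ℝ)) + Real.exp (-((L : ℝ) - (M : ℝ))))
            * (Real.exp (2 * V * |s|) - 1) / (2 * V) := by
  intro s
  set N : A := ∑ x ∈ Finset.Icc (-L) 0, n x with hN
  set J : A := Complex.I • (h (-M - 1) * h (-M) - h (-M) * h (-M - 1)) with hJ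
  set D1 : A := Complex.I • (n (-L - 1) * h (-L - 1) - h (-L - 1) * n (-L - 1)) with hD1
  set D2 : A := Complex.I • (n 0 * h 0 - h 0 * n 0) with hD2
  set K : ℝ := C * Real.exp 5 * (Real.exp (-(M : ℝ)) + Real.exp (-((L : ℝ) - (M : ℝ)))) with hK
  have hf : ∀ t : ℝ, HasDerivAt (fun t : ℝ => α t N * J - J * α t N)
      (α t (D1 - D2) * J - J * α t (D1 - D2)) t := by
    intro t
    exact ((hdiffN t).mul_const J).sub ((hdiffN t).const_mul J)
  have h0 : α (0 : ℝ) N * J - J * α 0 N = 0 := by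
    rw [hα0 N]; exact hcomm
  have hb : ∀ t : ℝ, ‖α t (D1 - D2) * J - J * α t (D1 - D2)‖
      ≤ K * Real.exp (2 * V * |t|) := by
    intro t
    have hsplit : α t (D1 - D2) * J - J * α t (D1 - D2)
        = (α t D1 * J - J * α t D1) - (α t D2 * J - J * α t D2) := by
      rw [map_sub]
      noncomm_ring
    have h1 := hLR t (-L - 1) (by
      have : |(-L - 1) + M| = L + 1 - M := by
        rw [abs_of_nonpos (by omega)]; omega
      omega)
    have h2 := hLR t 0 (by
      have : |(0 : ℤ) + M| = M := by rw [abs_of_nonneg (by omega)]; omega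
      omega)
    have habs1 : ((|(-L - 1) + M| : ℤ) : ℝ) = (L : ℝ) + 1 - (M : ℝ) := by
      have : |(-L - 1) + M| = L + 1 - M := by
        rw [abs_of_nonpos (by omega)]; omega
      rw [this]; push_cast; ring
    have habs2 : ((|(0 : ℤ) + M| : ℤ) : ℝ) = (M : ℝ) := by
      have : |(0 : ℤ) + M| = M := by rw [abs_of_nonneg (by omega)]; omega
      rw [this]
    rw [habs1] at h1
    rw [habs2] at h2
    have e1 : Real.exp (-((L : ℝ) + 1 - (M : ℝ) - 5))
        ≤ Real.exp 5 * Real.exp (-((L : ℝ) - (M : ℝ))) := by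
      rw [← Real.exp_add]
      exact Real.exp_le_exp.2 (by linarith)
    have e2 : Real.exp (-((M : ℝ) - 5)) = Real.exp 5 * Real.exp (-(M : ℝ)) := by
      rw [← Real.exp_add]; ring_nf
    have hE : (0 : ℝ) < Real.exp (2 * V * |t|) := Real.exp_pos _
    calc ‖α t (D1 - D2) * J - J * α t (D1 - D2)‖
        ≤ ‖α t D1 * J - J * α t D1‖ + ‖α t D2 * J - J * α t D2‖ := by
          rw [hsplit]; exact norm_sub_le _ _
      _ ≤ C * Real.exp (-((L : ℝ) + 1 - (M : ℝ) - 5)) * Real.exp (2 * V * |t|)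
          + C * Real.exp (-((M : ℝ) - 5)) * Real.exp (2 * V * |t|) := by
          · simp only [hD1, hD2, hJ]
            exact add_le_add h1 h2
      _ ≤ K * Real.exp (2 * V * |t|) := by
          rw [hK]
          have : C * Real.exp (-((L : ℝ) + 1 - (M : ℝ) - 5))
              + C * Real.exp (-((M : ℝ) - 5))
              ≤ C * Real.exp 5 * (Real.exp (-(M : ℝ)) + Real.exp (-((L : ℝ) - (M : ℝ)))) := by
            rw [e2]
            nlinarith [hC.le, e1, Real.exp_pos (-((L:ℝ)+1-(M:ℝ)-5))]
          nlinarith [hE]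
  have := aux_gron hf h0 hV hb (-s)
  simpa [abs_neg] using this
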